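/- arXiv:1201.4378 — 2 statements merged into one kernel-verified Lean document; each statement's English description precedes it below -/
import Mathlib

section
/- Let Φ be a root system spanning a 2-dimensional Euclidean space V and P an alcoved polytope for Φ (a bounded intersection of half-spaces with outer normals in Φ, with all inequalities tight). Then P has a generating set of cardinality at most |Φ|/2: for each pair of cyclically consecutive roots a, b there is a vertex of P lying on both support hyperplanes perpendicular to a and b. -/
open scoped RealInnerProductSpace

namespace DimTwoAux

noncomputable section

abbrev V2 := EuclideanSpace ℝ (Fin 2)

def toC (v : V2) : ℂ := ⟨v 0, v 1⟩

def cross (u v : V2) : ℝ := u 0 * v 1 - u 1 * v 0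

def argE (v : V2) : ℝ := (toC v).arg

lemma toC_ne_zero {v : V2} (h : v ≠ 0) : toC v ≠ 0 := by
  intro hc
  apply h
  have h0 : v 0 = 0 := congrArg Complex.re hc
  have h1 : v 1 = 0 := congrArg Complex.im hc
  ext i
  fin_cases i <;> simpa [h0, h1]

lemma inner_expand (u v : V2) : ⟪u, v⟫ = u 0 * v 0 + u 1 * v 1 := by
  simp [PiLp.inner_apply, Fin.sum_univ_two]
  ring

lemma cross_eq {u v : V2} (hu : u ≠ 0) (hv : v ≠ 0) :
    cross u v = ‖toC u‖ * ‖toC v‖ * Real.sin (argE v - argE u) := by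
  have hu' := toC_ne_zero hu
  have hv' := toC_ne_zero hv
  have hw : (starRingEnd ℂ) (toC u) * toC v ≠ 0 :=
    mul_ne_zero (by simpa using hu') hv'
  have him : ((starRingEnd ℂ) (toC u) * toC v).im = cross u v := by
    simp [toC, cross, Complex.mul_im]
    ring
  have habs : ‖(starRingEnd ℂ) (toC u) * toC v‖
      = ‖toC u‖ * ‖toC v‖ := by
    simp [map_mul]
  have hsin : Real.sin (((starRingEnd ℂ) (toC u) * toC v).arg)
      = Real.sin (argE v - argE u) := by
    have h1 : ((((starRingEnd ℂ) (toC u) * toC v).arg : ℝ) : Real.Angle)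
        = ((argE v - argE u : ℝ) : Real.Angle) := by
      rw [Complex.arg_mul_coe_angle (by simpa using hu') hv',
        Complex.arg_conj_coe_angle]
      rw [sub_eq_add_neg, Real.Angle.coe_add, Real.Angle.coe_neg]
      unfold argE
      abel
    calc Real.sin (((starRingEnd ℂ) (toC u) * toC v).arg)
        = Real.Angle.sin (((((starRingEnd ℂ) (toC u) * toC v).arg : ℝ)) : Real.Angle) :=
          (Real.Angle.sin_coe _).symm
      _ = Real.Angle.sin ((argE v - argE u : ℝ) : Real.Angle) := by rw [h1]
      _ = Real.sin (argE v - argE u) := Real.Angle.sin_coe _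
  have := Complex.sin_arg ((starRingEnd ℂ) (toC u) * toC v)
  rw [hsin] at this
  have habs0 : ‖(starRingEnd ℂ) (toC u) * toC v‖ ≠ 0 := by
    simpa using hw
  field_simp at this
  rw [← him, ← this, habs]
  ring

lemma argE_mem_Ioc {v : V2} : argE v ∈ Set.Ioc (-Real.pi) Real.pi :=
  ⟨Complex.neg_pi_lt_arg _, Complex.arg_le_pi _⟩

lemma toC_neg (v : V2) : toC (-v) = -toC v := by
  simp [toC, Complex.ext_iff]

lemma argE_neg_of_nonpos {v : V2} (hv : v ≠ 0) (h : argE v ≤ 0) :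
    argE (-v) = argE v + Real.pi := by
  have h1 : ((argE (-v) : ℝ) : Real.Angle) = ((argE v + Real.pi : ℝ) : Real.Angle) := by
    unfold argE
    rw [toC_neg, Complex.arg_neg_coe_angle (toC_ne_zero hv), Real.Angle.coe_add]
  have h2 : ((argE (-v) : ℝ) : Real.Angle).toReal = argE (-v) :=
    Real.Angle.toReal_coe_eq_self_iff.mpr ⟨(argE_mem_Ioc (v := -v)).1, (argE_mem_Ioc (v := -v)).2⟩
  have h3 : ((argE v + Real.pi : ℝ) : Real.Angle).toReal = argE v + Real.pi := by
    refine Real.Angle.toReal_coe_eq_self_iff.mpr ⟨?_, by linarith⟩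
    have := (argE_mem_Ioc (v := v)).1
    have := Real.pi_pos
    linarith
  rw [← h2, h1, h3]

lemma argE_neg_of_pos {v : V2} (hv : v ≠ 0) (h : 0 < argE v) :
    argE (-v) = argE v - Real.pi := by
  have h1 : ((argE (-v) : ℝ) : Real.Angle) = ((argE v - Real.pi : ℝ) : Real.Angle) := by
    unfold argE
    rw [toC_neg, Complex.arg_neg_coe_angle (toC_ne_zero hv), Real.Angle.coe_sub,
      sub_eq_add_neg, Real.Angle.neg_coe_pi]
  have h2 : ((argE (-v) : ℝ) : Real.Angle).toReal = argE (-v) :=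
    Real.Angle.toReal_coe_eq_self_iff.mpr ⟨(argE_mem_Ioc (v := -v)).1, (argE_mem_Ioc (v := -v)).2⟩
  have h3 : ((argE v - Real.pi : ℝ) : Real.Angle).toReal = argE v - Real.pi := by
    refine Real.Angle.toReal_coe_eq_self_iff.mpr ⟨?_, ?_⟩
    · have := Real.pi_pos; linarith
    · have := (argE_mem_Ioc (v := v)).2; have := Real.pi_pos; linarith
  rw [← h2, h1, h3]

lemma exists_pos_smul_of_argE_eq {u v : V2} (hu : u ≠ 0) (hv : v ≠ 0)
    (h : argE u = argE v) : ∃ t : ℝ, 0 < t ∧ u = t • v := by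
  have hray : SameRay ℝ (toC v) (toC u) :=
    Complex.sameRay_iff.mpr (Or.inr (Or.inr h.symm))
  obtain ⟨t, ht, htu⟩ := hray.exists_pos_left (toC_ne_zero hv) (toC_ne_zero hu)
  refine ⟨t, ht, ?_⟩
  have hre : u 0 = t * v 0 := by
    have := congrArg Complex.re htu
    simpa [toC, Complex.smul_re] using this.symm
  have him : u 1 = t * v 1 := by
    have := congrArg Complex.im htu
    simpa [toC, Complex.smul_im] using this.symm
  ext i
  fin_cases i
  · simpa using hre
  · simpa using him

lemma sin_pos_cases {x : ℝ} (h1 : -(2 * Real.pi) < x) (h2 : x < 2 * Real.pi)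
    (hs : 0 < Real.sin x) : (0 < x ∧ x < Real.pi) ∨ x < -Real.pi := by
  have hpi := Real.pi_pos
  by_contra hcon
  push_neg at hcon
  obtain ⟨h3, h4⟩ := hcon
  have : Real.sin x ≤ 0 := by
    rcases le_or_gt x 0 with h5 | h5
    · have : 0 ≤ Real.sin (-x) := Real.sin_nonneg_of_nonneg_of_le_pi (by linarith) (by linarith)
      rw [Real.sin_neg] at this
      linarith
    · have hx : Real.pi ≤ x := h3 h5
      have : 0 ≤ Real.sin (x - Real.pi) :=
        Real.sin_nonneg_of_nonneg_of_le_pi (by linarith) (by linarith)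
      rw [Real.sin_sub_pi] at this
      linarith
  linarith

lemma exists_corner {Φ : Finset V2} (c : V2 → ℝ) (P : Set V2)
    (hP : P = ⋂ a ∈ Φ, {x | ⟪a, x⟫ ≤ c a})
    (htight : ∀ a ∈ Φ, ∃ x ∈ P, ⟪a, x⟫ = c a)
    {a b : V2} (ha : a ∈ Φ) (hb : b ∈ Φ) (hab : 0 < cross a b)
    (hadj : ∀ r ∈ Φ, cross a r ≤ 0 ∨ cross r b ≤ 0) :
    ∃ x ∈ P, ⟪a, x⟫ = c a ∧ ⟪b, x⟫ = c b := by
  have hPsub : ∀ r ∈ Φ, ∀ x ∈ P, ⟪r, x⟫ ≤ c r := by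
    intro r hr x hx
    rw [hP] at hx
    simp only [Set.mem_iInter, Set.mem_setOf_eq] at hx
    exact hx r hr
  set d : ℝ := cross a b with hd
  have hdne : d ≠ 0 := ne_of_gt hab
  set x0 : V2 := !₂[(c a * b 1 - c b * a 1) / d, (a 0 * c b - b 0 * c a) / d] with hx0
  have hx00 : x0 0 = (c a * b 1 - c b * a 1) / d := rfl
  have hx01 : x0 1 = (a 0 * c b - b 0 * c a) / d := rfl
  have hta : ⟪a, x0⟫ = c a := by
    rw [inner_expand, hx00, hx01]
    field_simp [hdne]
    rw [hd]
    simp only [cross]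
    ring
  have htb : ⟪b, x0⟫ = c b := by
    rw [inner_expand, hx00, hx01]
    field_simp [hdne]
    rw [hd]
    simp only [cross]
    ring
  refine ⟨x0, ?_, hta, htb⟩
  rw [hP]
  simp only [Set.mem_iInter, Set.mem_setOf_eq]
  intro r hr
  set α : ℝ := cross r b / d with hα
  set β : ℝ := cross a r / d with hβ
  have hdecomp : ∀ i : Fin 2, r i = α * a i + β * b i := by
    intro i
    fin_cases i <;>
    · show r _ = _
      rw [hα, hβ]
      field_simp [hdne]
      rw [hd]
      simp only [cross, Fin.zero_eta, Fin.mk_one]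
      ring
  have hinner : ∀ y : V2, ⟪r, y⟫ = α * ⟪a, y⟫ + β * ⟪b, y⟫ := by
    intro y
    rw [inner_expand, inner_expand, inner_expand, hdecomp 0, hdecomp 1]
    ring
  have hrx0 : ⟪r, x0⟫ = α * c a + β * c b := by
    rw [hinner, hta, htb]
  rcases hadj r hr with hc1 | hc2
  · -- β ≤ 0, use a maximizer of a
    have hβle : β ≤ 0 := div_nonpos_of_nonpos_of_nonneg hc1 (le_of_lt hab)
    obtain ⟨y, hyP, hya⟩ := htight a ha
    have h1 : ⟪r, y⟫ ≤ c r := hPsub r hr y hyP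
    have h2 : ⟪b, y⟫ ≤ c b := hPsub b hb y hyP
    have : ⟪r, y⟫ = α * c a + β * ⟪b, y⟫ := by rw [hinner, hya]
    nlinarith
  · -- α ≤ 0, use a maximizer of b
    have hαle : α ≤ 0 := div_nonpos_of_nonpos_of_nonneg hc2 (le_of_lt hab)
    obtain ⟨y, hyP, hyb⟩ := htight b hb
    have h1 : ⟪r, y⟫ ≤ c r := hPsub r hr y hyP
    have h2 : ⟪a, y⟫ ≤ c a := hPsub a ha y hyP
    have : ⟪r, y⟫ = α * ⟪a, y⟫ + β * c b := by rw [hinner, hyb]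
    nlinarith

lemma not_bounded_of_line {Φ : Finset V2} (c : V2 → ℝ) (P : Set V2)
    (hP : P = ⋂ a ∈ Φ, {x | ⟪a, x⟫ ≤ c a}) (hne : P.Nonempty)
    {a : V2} (ha : a ≠ 0) (hall : ∀ r ∈ Φ, ∃ t : ℝ, r = t • a) :
    ¬ Bornology.IsBounded P := by
  intro hbd
  obtain ⟨C, hC⟩ := isBounded_iff_forall_norm_le.mp hbd
  obtain ⟨x, hx⟩ := hne
  set v : V2 := !₂[-(a 1), a 0] with hv
  have hv0 : v ≠ 0 := by
    intro h
    apply ha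
    have h0 : v 0 = 0 := by rw [h]; rfl
    have h1 : v 1 = 0 := by rw [h]; rfl
    have hv0' : -(a 1) = 0 := h0
    have hv1' : a 0 = 0 := h1
    ext i
    fin_cases i
    · simpa using hv1'
    · simpa using (neg_eq_zero.mp hv0')
  have hvpos : (0 : ℝ) < ‖v‖ := norm_pos_iff.mpr hv0
  have hav : ⟪a, v⟫ = 0 := by
    rw [inner_expand]
    show a 0 * (-(a 1)) + a 1 * (a 0) = 0
    ring
  have hmem : ∀ t : ℝ, x + t • v ∈ P := by
    intro t
    rw [hP]
    simp only [Set.mem_iInter, Set.mem_setOf_eq]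
    intro r hr
    obtain ⟨s, rfl⟩ := hall r hr
    have hxP : ⟪s • a, x⟫ ≤ c (s • a) := by
      rw [hP] at hx
      simp only [Set.mem_iInter, Set.mem_setOf_eq] at hx
      exact hx _ hr
    calc ⟪s • a, x + t • v⟫ = ⟪s • a, x⟫ + (s * t) * ⟪a, v⟫ := by
          rw [inner_add_right, real_inner_smul_left, real_inner_smul_left,
            inner_smul_right]
          ring
      _ = ⟪s • a, x⟫ := by rw [hav]; ring
      _ ≤ c (s • a) := hxP
  set t : ℝ := (C + ‖x‖ + 1) / ‖v‖ with ht
  have hCpos : 0 ≤ C := le_trans (norm_nonneg x) (hC x hx)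
  have htpos : 0 < t := by positivity
  have hnt : ‖t • v‖ = C + ‖x‖ + 1 := by
    rw [norm_smul, Real.norm_eq_abs, abs_of_pos htpos, ht]
    field_simp
  have hge : C + ‖x‖ + 1 ≤ ‖x + t • v‖ + ‖x‖ := by
    rw [← hnt]
    calc ‖t • v‖ = ‖(x + t • v) - x‖ := by rw [add_sub_cancel_left]
      _ ≤ ‖x + t • v‖ + ‖x‖ := norm_sub_le _ _
  have := hC _ (hmem t)
  linarith

lemma tight_of_sameArg {Φ : Finset V2} {c : V2 → ℝ} {P : Set V2}
    (hPsub : ∀ r ∈ Φ, ∀ x ∈ P, ⟪r, x⟫ ≤ c r)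
    (htight : ∀ a ∈ Φ, ∃ x ∈ P, ⟪a, x⟫ = c a)
    {a r x : V2} (ha : a ∈ Φ) (hr : r ∈ Φ) (ha0 : a ≠ 0) (hr0 : r ≠ 0)
    (harg : argE r = argE a) (hx : x ∈ P) (hxa : ⟪a, x⟫ = c a) :
    ⟪r, x⟫ = c r := by
  obtain ⟨t, ht, hteq⟩ := exists_pos_smul_of_argE_eq hr0 ha0 harg
  have hcr : c r = t * c a := by
    obtain ⟨y, hyP, hyr⟩ := htight r hr
    obtain ⟨z, hzP, hza⟩ := htight a ha
    have h1 : c r ≤ t * c a := by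
      rw [← hyr, hteq, real_inner_smul_left]
      have := hPsub a ha y hyP
      nlinarith
    have h2 : t * c a ≤ c r := by
      have h4 : ⟪r, z⟫ = t * c a := by rw [hteq, real_inner_smul_left, hza]
      linarith [hPsub r hr z hzP]
    linarith
  have h5 : ⟪r, x⟫ = t * ⟪a, x⟫ := by rw [hteq, real_inner_smul_left]
  rw [h5, hxa, hcr]

end

end DimTwoAux

open DimTwoAux in
/-- A two-dimensional alcoved polytope for a root system `Φ` (a bounded
intersection of half-spaces with outer normals in `Φ`, all tight) has a
generating set of cardinality at most `|Φ| / 2`: a set of points of `P`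
touching every support hyperplane perpendicular to a root. -/
theorem dim_two_generating_set
    (Φ : Finset (EuclideanSpace ℝ (Fin 2))) (hΦ0 : ∀ a ∈ Φ, a ≠ 0)
    (hΦneg : ∀ a ∈ Φ, -a ∈ Φ) (c : EuclideanSpace ℝ (Fin 2) → ℝ)
    (P : Set (EuclideanSpace ℝ (Fin 2)))
    (hP : P = ⋂ a ∈ Φ, {x | ⟪a, x⟫ ≤ c a})
    (hbd : Bornology.IsBounded P) (hne : P.Nonempty)
    (htight : ∀ a ∈ Φ, ∃ x ∈ P, ⟪a, x⟫ = c a) :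
    ∃ S : Finset (EuclideanSpace ℝ (Fin 2)),
      ↑S ⊆ P ∧ S.card ≤ Φ.card / 2 ∧ ∀ a ∈ Φ, ∃ s ∈ S, ⟪a, s⟫ = c a := by
  classical
  have hpi := Real.pi_pos
  have hPsub : ∀ r ∈ Φ, ∀ x ∈ P, ⟪r, x⟫ ≤ c r := by
    intro r hr x hx
    rw [hP] at hx
    simp only [Set.mem_iInter, Set.mem_setOf_eq] at hx
    exact hx r hr
  set A : Finset ℝ := Φ.image argE with hA
  have hrep : ∀ θ ∈ A, ∃ r ∈ Φ, argE r = θ := by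
    intro θ hθ
    obtain ⟨r, hr, hrθ⟩ := Finset.mem_image.mp hθ
    exact ⟨r, hr, hrθ⟩
  have hmemA : ∀ r ∈ Φ, argE r ∈ A := fun r hr => Finset.mem_image_of_mem _ hr
  have hrangeA : ∀ θ ∈ A, -Real.pi < θ ∧ θ ≤ Real.pi := by
    intro θ hθ
    obtain ⟨r, _, hrθ⟩ := hrep θ hθ
    exact hrθ ▸ ⟨(argE_mem_Ioc (v := r)).1, (argE_mem_Ioc (v := r)).2⟩
  have hsymm : ∀ θ ∈ A, θ ≤ 0 → θ + Real.pi ∈ A := by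
    intro θ hθ hle
    obtain ⟨r, hr, hrθ⟩ := hrep θ hθ
    have h := argE_neg_of_nonpos (hΦ0 r hr) (by rw [hrθ]; exact hle)
    rw [hrθ] at h
    have hm := hmemA (-r) (hΦneg r hr)
    rwa [h] at hm
  have hsymm' : ∀ θ ∈ A, 0 < θ → θ - Real.pi ∈ A := by
    intro θ hθ hle
    obtain ⟨r, hr, hrθ⟩ := hrep θ hθ
    have h := argE_neg_of_pos (hΦ0 r hr) (by rw [hrθ]; exact hle)
    rw [hrθ] at h
    have hm := hmemA (-r) (hΦneg r hr)
    rwa [h] at hm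
  -- A has even cardinality
  have hkeven : ∃ m : ℕ, A.card = m + m := by
    have hcards : (A.filter (fun θ => θ ≤ 0)).card = (A.filter (fun θ => ¬ θ ≤ 0)).card := by
      apply Finset.card_nbij (fun θ => θ + Real.pi)
      · intro θ hθ
        simp only [Finset.coe_filter, Set.mem_setOf_eq] at hθ ⊢
        refine ⟨hsymm θ hθ.1 hθ.2, ?_⟩
        have := (hrangeA θ hθ.1).1
        push_neg
        linarith
      · intro θ1 h1 θ2 h2 h
        simpa using h
      · intro φ hφ
        simp only [Finset.coe_filter, Set.mem_setOf_eq] at hφ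
        push_neg at hφ
        refine ⟨φ - Real.pi, ?_, by ring⟩
        simp only [Finset.coe_filter, Set.mem_setOf_eq]
        have := (hrangeA φ hφ.1).2
        exact ⟨hsymm' φ hφ.1 hφ.2, by linarith⟩
    have := Finset.card_filter_add_card_filter_not (s := A) (fun θ => θ ≤ 0)
    exact ⟨(A.filter (fun θ => θ ≤ 0)).card, by omega⟩
  obtain ⟨m, hm⟩ := hkeven
  set L : List ℝ := A.sort (· ≤ ·) with hL
  have hLlen : L.length = A.card := Finset.length_sort _
  have hmemL : ∀ θ : ℝ, θ ∈ L ↔ θ ∈ A := fun θ => Finset.mem_sort _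
  have hsorted : L.Pairwise (· < ·) := (Finset.sortedLT_sort A).pairwise
  have hadjL : ∀ (j : ℕ) (hj : j + 1 < L.length), ∀ θ ∈ A,
      ¬(L.get ⟨j, by omega⟩ < θ ∧ θ < L.get ⟨j + 1, hj⟩) := by
    intro j hj θ hθ hcon
    obtain ⟨p, hp⟩ := List.get_of_mem ((hmemL θ).mpr hθ)
    have h1 : (⟨j, by omega⟩ : Fin L.length) < p := by
      by_contra hc
      push_neg at hc
      rcases lt_or_eq_of_le hc with hlt | heq
      · exact absurd (hp ▸ hsorted.rel_get_of_lt hlt) (by push_neg; exact le_of_lt hcon.1)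
      · rw [heq] at hp; rw [hp] at hcon; exact lt_irrefl θ hcon.1
    have h2 : (j : ℕ) + 1 ≤ (p : ℕ) := h1
    have h3 : L.get ⟨j + 1, hj⟩ ≤ L.get p := by
      rcases lt_or_eq_of_le h2 with hlt | heq
      · exact le_of_lt (hsorted.rel_get_of_lt (by simpa [Fin.lt_def] using hlt))
      · apply le_of_eq; congr 1; exact Fin.ext heq
    rw [hp] at h3
    exact absurd hcon.2 (by push_neg; exact h3)
  -- the master pair construction
  have Hpair : ∀ (j : ℕ) (hj : j + 1 < L.length),
      ∃ x, x ∈ P ∧ ∀ r ∈ Φ,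
        (argE r = L.get ⟨j, by omega⟩ ∨ argE r = L.get ⟨j + 1, hj⟩) → ⟪r, x⟫ = c r := by
    intro j hj
    have hj' : j < L.length := by omega
    set θ1 : ℝ := L.get ⟨j, hj'⟩ with hθ1
    set θ2 : ℝ := L.get ⟨j + 1, hj⟩ with hθ2
    have hθ1A : θ1 ∈ A := (hmemL θ1).mp (L.get_mem _)
    have hθ2A : θ2 ∈ A := (hmemL θ2).mp (L.get_mem _)
    obtain ⟨a, haΦ, haθ⟩ := hrep θ1 hθ1A
    obtain ⟨b, hbΦ, hbθ⟩ := hrep θ2 hθ2A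
    have ha0 := hΦ0 a haΦ
    have hb0 := hΦ0 b hbΦ
    have hlt : θ1 < θ2 := hsorted.rel_get_of_lt (by simp [Fin.lt_def])
    have hgap : θ2 - θ1 < Real.pi := by
      by_contra hge
      push_neg at hge
      have hr2 := (hrangeA θ2 hθ2A).2
      have hr1 := (hrangeA θ1 hθ1A).1
      have hθ1le : θ1 ≤ 0 := by linarith
      have hmem' : θ1 + Real.pi ∈ A := hsymm θ1 hθ1A hθ1le
      have hle2 : θ1 + Real.pi ≤ θ2 := by linarith
      rcases lt_or_eq_of_le hle2 with hlt2 | heq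
      · exact hadjL j hj (θ1 + Real.pi) hmem' ⟨by linarith, hlt2⟩
      · -- θ2 = θ1 + π: all roots are collinear, contradiction with boundedness
        have hsub : ∀ φ ∈ A, φ = θ1 ∨ φ = θ2 := by
          intro φ hφ
          by_contra hcon
          push_neg at hcon
          obtain ⟨hn1, hn2⟩ := hcon
          have hrφ := hrangeA φ hφ
          rcases lt_trichotomy φ θ1 with h | h | h
          · exact hadjL j hj (φ + Real.pi) (hsymm φ hφ (by linarith))
              ⟨by linarith, by linarith⟩
          · exact hn1 h
          · rcases lt_trichotomy φ θ2 with h2 | h2 | h2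
            · exact hadjL j hj φ hφ ⟨h, h2⟩
            · exact hn2 h2
            · exact hadjL j hj (φ - Real.pi) (hsymm' φ hφ (by linarith))
                ⟨by linarith, by linarith⟩
        have hcol : ∀ r ∈ Φ, ∃ t : ℝ, r = t • a := by
          intro r hr
          rcases hsub (argE r) (hmemA r hr) with h | h
          · obtain ⟨t, _, hteq⟩ :=
              exists_pos_smul_of_argE_eq (hΦ0 r hr) ha0 (h.trans haθ.symm)
            exact ⟨t, hteq⟩
          · have hnegarg : argE (-a) = θ2 := by
              rw [argE_neg_of_nonpos ha0 (by rw [haθ]; exact hθ1le), haθ, ← heq]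
            obtain ⟨t, _, hteq⟩ :=
              exists_pos_smul_of_argE_eq (hΦ0 r hr) (neg_ne_zero.mpr ha0)
                (h.trans hnegarg.symm)
            exact ⟨-t, by rw [hteq, smul_neg, neg_smul]⟩
        exact absurd hbd (not_bounded_of_line c P hP hne ha0 hcol)
    have habs : ∀ v : V2, v ≠ 0 → 0 < ‖toC v‖ := by
      intro v hv
      exact norm_pos_iff.mpr (toC_ne_zero hv)
    have habpos : 0 < cross a b := by
      rw [cross_eq ha0 hb0, haθ, hbθ]
      exact mul_pos (mul_pos (habs a ha0) (habs b hb0))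
        (Real.sin_pos_of_pos_of_lt_pi (by linarith) (by linarith))
    have hadj : ∀ r ∈ Φ, cross a r ≤ 0 ∨ cross r b ≤ 0 := by
      intro r hr
      by_contra hcon
      push_neg at hcon
      obtain ⟨h1, h2⟩ := hcon
      have hr0 := hΦ0 r hr
      have hs1 : 0 < Real.sin (argE r - θ1) := by
        have hc := cross_eq ha0 hr0
        rw [haθ] at hc
        rw [hc] at h1
        by_contra hs
        push_neg at hs
        nlinarith [habs a ha0, habs r hr0, mul_pos (habs a ha0) (habs r hr0)]
      have hs2 : 0 < Real.sin (θ2 - argE r) := by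
        have hc := cross_eq hr0 hb0
        rw [hbθ] at hc
        rw [hc] at h2
        by_contra hs
        push_neg at hs
        nlinarith [mul_pos (habs r hr0) (habs b hb0)]
      have hrr := hrangeA (argE r) (hmemA r hr)
      have hr1 := hrangeA θ1 hθ1A
      have hr2 := hrangeA θ2 hθ2A
      have hc1 := sin_pos_cases (x := argE r - θ1) (by linarith) (by linarith) hs1
      have hc2 := sin_pos_cases (x := θ2 - argE r) (by linarith) (by linarith) hs2
      have hbet : θ1 < argE r ∧ argE r < θ2 := by
        rcases hc1 with ⟨hx1, hx2⟩ | hx3 <;> rcases hc2 with ⟨hy1, hy2⟩ | hy3 <;>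
          constructor <;> linarith
      exact hadjL j hj (argE r) (hmemA r hr) hbet
    obtain ⟨x, hxP, hxa, hxb⟩ := exists_corner c P hP htight haΦ hbΦ habpos hadj
    refine ⟨x, hxP, ?_⟩
    intro r hr hor
    rcases hor with h | h
    · exact tight_of_sameArg hPsub htight haΦ hr ha0 (hΦ0 r hr)
        (h.trans haθ.symm) hxP hxa
    · exact tight_of_sameArg hPsub htight hbΦ hr hb0 (hΦ0 r hr)
        (h.trans hbθ.symm) hxP hxb
  -- assemble the generating set
  set g : ℕ → EuclideanSpace ℝ (Fin 2) := fun j =>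
    if h : j + 1 < L.length then (Hpair j h).choose else 0 with hg
  refine ⟨(Finset.range m).image (fun i => g (2 * i)), ?_, ?_, ?_⟩
  · intro s hs
    simp only [Finset.coe_image, Set.mem_image, Finset.coe_range, Set.mem_Iio] at hs
    obtain ⟨i, hi, hgi⟩ := hs
    have hlt : 2 * i + 1 < L.length := by omega
    rw [← hgi, hg]
    simp only [hlt, dif_pos]
    exact (Hpair (2 * i) hlt).choose_spec.1
  · calc ((Finset.range m).image (fun i => g (2 * i))).card
        ≤ (Finset.range m).card := Finset.card_image_le
      _ = m := Finset.card_range m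
      _ ≤ A.card / 2 := by omega
      _ ≤ Φ.card / 2 := Nat.div_le_div_right (Finset.card_image_le)
  · intro r hr
    obtain ⟨p, hp⟩ := List.get_of_mem ((hmemL (argE r)).mpr (hmemA r hr))
    obtain ⟨j, hjlen⟩ : ∃ j : ℕ, (p : ℕ) = j := ⟨p, rfl⟩
    have hjL : j < L.length := hjlen ▸ p.isLt
    set i : ℕ := j / 2 with hi
    have hLm : L.length = m + m := by rw [hLlen, hm]
    have him : i < m := by omega
    have hlt : 2 * i + 1 < L.length := by omega
    refine ⟨g (2 * i), ?_, ?_⟩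
    · exact Finset.mem_image_of_mem _ (Finset.mem_range.mpr him)
    · have hspec := (Hpair (2 * i) hlt).choose_spec
      rw [hg]
      simp only [hlt, dif_pos]
      apply hspec.2 r hr
      have hjcase : j = 2 * i ∨ j = 2 * i + 1 := by omega
      rcases hjcase with hj | hj
      · left
        rw [← hp]
        congr 1
        apply Fin.ext
        show (p : ℕ) = 2 * i
        omega
      · right
        rw [← hp]
        congr 1
        apply Fin.ext
        show (p : ℕ) = 2 * i + 1
        omega
end

section
/- In ℝ^3/ℝ(1,1,1), the alcoved polytope generated by the two points represented by (0,0,1) and (0,1,0) (with respect to the type A_2 root half-spaces x_i − x_j ≤ c) is the square with vertices (0,0,0), (0,0,1), (0,1,0), (0,1,1); however, the tropical convex hull of these two points is strictly smaller than this square (in particular it does not contain (0,1,1) modulo ℝ(1,1,1)). -/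
/-- In `ℝ³/ℝ(1,1,1)`, the alcoved polytope generated by the two points
`p = (0,0,1)` and `q = (0,1,0)` (for the type `A₂` root half-spaces
`x i - x j ≤ c`) is the unit square with vertices `(0,0,0)`, `(0,0,1)`,
`(0,1,0)`, `(0,1,1)` (described modulo the all-ones line by
`0 ≤ x₁ - x₀ ≤ 1` and `0 ≤ x₂ - x₀ ≤ 1`); however, the min-plus tropical
convex hull of `p` and `q` does not contain the vertex `(0,1,1)` modulo
`ℝ(1,1,1)`. -/
theorem square_generated_but_not_tropical_hull
    (p q : Fin 3 → ℝ) (hp : p = ![0, 0, 1]) (hq : q = ![0, 1, 0]) :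
    {x : Fin 3 → ℝ | ∀ i j : Fin 3, i ≠ j →
        x i - x j ≤ max (p i - p j) (q i - q j)} =
      {x : Fin 3 → ℝ | 0 ≤ x 1 - x 0 ∧ x 1 - x 0 ≤ 1 ∧
        0 ≤ x 2 - x 0 ∧ x 2 - x 0 ≤ 1} ∧
    ∀ μ ν r : ℝ,
      (fun i => min (μ + p i) (ν + q i)) ≠ (fun i : Fin 3 => r) + ![0, 1, 1] := by
  subst hp hq
  constructor
  · ext x
    simp only [Set.mem_setOf_eq]
    constructor
    · intro h
      have h1 := h 0 1 (by decide)
      have h2 := h 1 0 (by decide)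
      have h3 := h 0 2 (by decide)
      have h4 := h 2 0 (by decide)
      simp [max_def] at h1 h2 h3 h4
      refine ⟨by linarith, by linarith, by linarith, by linarith⟩
    · rintro ⟨a, b, c, d⟩ i j hij
      fin_cases i <;> fin_cases j <;> simp_all [max_def] <;> linarith
  · intro μ ν r h
    have h0 := congrFun h 0
    have h1 := congrFun h 1
    have h2 := congrFun h 2
    simp [min_def] at h0 h1 h2
    split_ifs at h0 h1 h2 <;> linarith
end
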